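/- Let p ∈ (0,1), and consider a cycle of length k ≥ 4 under the AP design: W_1, …, W_{k−1} follow the path dynamics (P(W_1=1)=p/(1+p), P(W_j=1|W_{j−1}=0)=p, P(W_j=1|W_{j−1}=1)=0), and W_k = 1 if and only if W_1 = 0 and W_{k−1} = 0. Then P(W_k = 1) = (1 − (−p)^{k−1})/(1+p)². -/

import Mathlib

open MeasureTheory ProbabilityTheory

section aux
variable {Ω : Type*} [MeasureSpace Ω] [IsProbabilityMeasure (ℙ : Measure Ω)]
  (W : ℕ → Ω → ℝ)

noncomputable def cOf (j : ℕ) (d : Fin j → Bool) : ℕ → ℝ :=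
  fun i => if h : i - 1 < j then (if d ⟨i - 1, h⟩ then 1 else 0) else 0

def Ev (j : ℕ) (b : ℕ → ℝ) : Set Ω := {ω | ∀ i ∈ Finset.Icc 1 j, W i ω = b i}

lemma Ev_meas (hW : ∀ j, Measurable (W j)) (j : ℕ) (b : ℕ → ℝ) :
    MeasurableSet (Ev W j b) := by
  have : Ev W j b = ⋂ i ∈ Finset.Icc 1 j, {ω | W i ω = b i} := by
    ext ω; simp [Ev, Set.mem_iInter]
  rw [this]
  exact Set.Finite.measurableSet_biInter (Finset.finite_toSet _)
    (fun i _ => (hW i) (measurableSet_singleton _))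

lemma WsetMeas (hW : ∀ j, Measurable (W j)) (j : ℕ) (c : ℝ) :
    MeasurableSet {ω | W j ω = c} := (hW j) (measurableSet_singleton c)

lemma partition (hW : ∀ j, Measurable (W j)) (h01 : ∀ j ω, W j ω = 0 ∨ W j ω = 1)
    (j : ℕ) (S : Set Ω) (hS : MeasurableSet S) :
    (ℙ : Measure Ω) S = ∑ d : Fin j → Bool, ℙ (S ∩ Ev W j (cOf j d)) := by
  have hcover : S = ⋃ d : Fin j → Bool, S ∩ Ev W j (cOf j d) := by
    ext ω
    constructor
    · intro hω
      refine Set.mem_iUnion.2 ⟨fun t => decide (W (t + 1) ω = 1), hω, ?_⟩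
      intro i hi
      simp only [Finset.mem_Icc] at hi
      have hlt : i - 1 < j := by omega
      have hi1 : i - 1 + 1 = i := by omega
      simp only [cOf, dif_pos hlt]
      rcases h01 i ω with h | h
      · rw [h]; simp [hi1, h]
      · rw [h]; simp [hi1, h]
    · intro hω
      rcases Set.mem_iUnion.1 hω with ⟨d, hd, _⟩
      exact hd
  have hdisj : Pairwise (Function.onFun Disjoint
      (fun d : Fin j → Bool => S ∩ Ev W j (cOf j d))) := by
    intro d d' hdd'
    rcases Function.ne_iff.1 hdd' with ⟨t, ht⟩
    refine Set.disjoint_left.2 ?_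
    rintro ω ⟨-, h1⟩ ⟨-, h2⟩
    have htm : (t : ℕ) + 1 ∈ Finset.Icc 1 j := by
      simp only [Finset.mem_Icc]; omega
    have e1 := h1 _ htm
    have e2 := h2 _ htm
    have hlt : (t : ℕ) + 1 - 1 < j := by omega
    simp only [cOf, dif_pos hlt] at e1 e2
    have heq : (⟨(t : ℕ) + 1 - 1, hlt⟩ : Fin j) = t := by apply Fin.ext; simp
    rw [heq] at e1 e2
    rw [e1] at e2
    rcases Bool.eq_false_or_eq_true (d t) with h | h <;>
      rcases Bool.eq_false_or_eq_true (d' t) with h' | h' <;>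
        simp [h, h'] at e2 ht
  calc (ℙ : Measure Ω) S = ℙ (⋃ d : Fin j → Bool, S ∩ Ev W j (cOf j d)) := by rw [← hcover]
    _ = ∑' d : Fin j → Bool, ℙ (S ∩ Ev W j (cOf j d)) :=
        measure_iUnion hdisj (fun d => hS.inter (Ev_meas W hW j _))
    _ = ∑ d : Fin j → Bool, ℙ (S ∩ Ev W j (cOf j d)) := tsum_fintype _

lemma step_lemma (p : ℝ) (hp : p ∈ Set.Ioo (0:ℝ) 1) (k : ℕ)
    (hW : ∀ j, Measurable (W j)) (h01 : ∀ j ω, W j ω = 0 ∨ W j ω = 1)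
    (hmarkov : ∀ j, 2 ≤ j → j ≤ k - 1 → ∀ b : ℕ → ℝ,
      (ℙ : Measure Ω) {ω | ∀ i ∈ Finset.Icc 1 (j - 1), W i ω = b i} ≠ 0 →
      ProbabilityTheory.cond ℙ {ω | ∀ i ∈ Finset.Icc 1 (j - 1), W i ω = b i}
          {ω | W j ω = 1}
        = if b (j - 1) = 0 then ENNReal.ofReal p else 0)
    (j : ℕ) (hj1 : 1 ≤ j) (hj2 : j + 1 ≤ k - 1) :
    (ℙ : Measure Ω) {ω | W 1 ω = 0 ∧ W (j+1) ω = 1}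
      = ENNReal.ofReal p * ℙ {ω | W 1 ω = 0 ∧ W j ω = 0} := by
  have hmeasL : MeasurableSet {ω : Ω | W 1 ω = 0 ∧ W (j+1) ω = 1} :=
    (WsetMeas W hW 1 0).inter (WsetMeas W hW (j+1) 1)
  have hmeasR : MeasurableSet {ω : Ω | W 1 ω = 0 ∧ W j ω = 0} :=
    (WsetMeas W hW 1 0).inter (WsetMeas W hW j 0)
  rw [partition W hW h01 j _ hmeasL, partition W hW h01 j _ hmeasR, Finset.mul_sum]
  apply Finset.sum_congr rfl
  intro d _
  set E := Ev W j (cOf j d) with hE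
  have hEmeas : MeasurableSet E := Ev_meas W hW j _
  have h1mem : 1 ∈ Finset.Icc 1 j := by simp [Finset.mem_Icc]; omega
  have hjmem : j ∈ Finset.Icc 1 j := by simp [Finset.mem_Icc]; omega
  have hlt0 : (0:ℕ) < j := by omega
  have hltj : j - 1 < j := by omega
  -- value of cOf at 1 and at j
  have hb1 : cOf j d 1 = if d ⟨0, hlt0⟩ then 1 else 0 := by simp [cOf, hlt0]
  have hbj : cOf j d j = if d ⟨j-1, hltj⟩ then 1 else 0 := by simp [cOf, hltj]
  by_cases hd0 : d ⟨0, hlt0⟩ = true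
  · -- E forces W 1 = 1, both sides empty
    have hsub : ∀ ω ∈ E, W 1 ω = 1 := by
      intro ω hω; have := hω 1 h1mem; rw [hb1, if_pos hd0] at this; exact this
    have e1 : {ω : Ω | W 1 ω = 0 ∧ W (j+1) ω = 1} ∩ E = ∅ := by
      ext ω; simp only [Set.mem_inter_iff, Set.mem_setOf_eq, Set.mem_empty_iff_false,
        iff_false, not_and]
      rintro ⟨h0, -⟩ hωE
      exact zero_ne_one (h0 ▸ hsub ω hωE)
    have e2 : {ω : Ω | W 1 ω = 0 ∧ W j ω = 0} ∩ E = ∅ := by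
      ext ω; simp only [Set.mem_inter_iff, Set.mem_setOf_eq, Set.mem_empty_iff_false,
        iff_false, not_and]
      rintro ⟨h0, -⟩ hωE
      exact zero_ne_one (h0 ▸ hsub ω hωE)
    rw [e1, e2]; simp
  · have hd0' : d ⟨0, hlt0⟩ = false := by simpa using hd0
    have hsub : ∀ ω ∈ E, W 1 ω = 0 := by
      intro ω hω; have := hω 1 h1mem; rw [hb1, if_neg (by simp [hd0'])] at this; exact this
    have e1 : {ω : Ω | W 1 ω = 0 ∧ W (j+1) ω = 1} ∩ E = E ∩ {ω : Ω | W (j+1) ω = 1} := by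
      ext ω; simp only [Set.mem_inter_iff, Set.mem_setOf_eq]
      constructor
      · rintro ⟨⟨-, h⟩, hE'⟩; exact ⟨hE', h⟩
      · rintro ⟨hE', h⟩; exact ⟨⟨hsub ω hE', h⟩, hE'⟩
    have e2 : {ω : Ω | W 1 ω = 0 ∧ W j ω = 0} ∩ E = {ω : Ω | W j ω = 0} ∩ E := by
      ext ω; simp only [Set.mem_inter_iff, Set.mem_setOf_eq]
      constructor
      · rintro ⟨⟨-, h⟩, hE'⟩; exact ⟨h, hE'⟩
      · rintro ⟨h, hE'⟩; exact ⟨⟨hsub ω hE', h⟩, hE'⟩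
    rw [e1, e2]
    -- rewrite the hmarkov event as E
    have hEform : {ω : Ω | ∀ i ∈ Finset.Icc 1 (j + 1 - 1), W i ω = cOf j d i} = E := by
      simp only [Nat.add_sub_cancel]; rfl
    have hcond := hmarkov (j+1) (by omega) hj2 (cOf j d)
    rw [hEform] at hcond
    have hkey : (ℙ : Measure Ω) (E ∩ {ω | W (j+1) ω = 1})
        = (if cOf j d (j + 1 - 1) = 0 then ENNReal.ofReal p else 0) * ℙ E := by
      by_cases hE0 : (ℙ : Measure Ω) E = 0
      · rw [hE0, mul_zero]
        exact le_antisymm (le_trans (measure_mono Set.inter_subset_left) hE0.le) zero_le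
      · rw [← hcond hE0, cond_mul_eq_inter hEmeas]
    simp only [Nat.add_sub_cancel] at hkey
    by_cases hdj : d ⟨j-1, hltj⟩ = true
    · -- E forces W j = 1 : both sides zero
      have hsubj : ∀ ω ∈ E, W j ω = 1 := by
        intro ω hω; have := hω j hjmem; rw [hbj, if_pos hdj] at this; exact this
      have eR : {ω : Ω | W j ω = 0} ∩ E = ∅ := by
        ext ω; simp only [Set.mem_inter_iff, Set.mem_setOf_eq, Set.mem_empty_iff_false,
          iff_false, not_and]
        intro h0 hE'
        exact zero_ne_one (h0 ▸ hsubj ω hE')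
      have hbjne : cOf j d j ≠ 0 := by rw [hbj, if_pos hdj]; exact one_ne_zero
      rw [eR, hkey, if_neg hbjne, zero_mul, measure_empty, mul_zero]
    · have hdj' : d ⟨j-1, hltj⟩ = false := by simpa using hdj
      have hsubj : ∀ ω ∈ E, W j ω = 0 := by
        intro ω hω; have := hω j hjmem; rw [hbj, if_neg (by simp [hdj'])] at this; exact this
      have eR : {ω : Ω | W j ω = 0} ∩ E = E := by
        ext ω; simp only [Set.mem_inter_iff, Set.mem_setOf_eq]
        exact ⟨fun h => h.2, fun h => ⟨hsubj ω h, h⟩⟩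
      have hbj0 : cOf j d j = 0 := by rw [hbj, if_neg (by simp [hdj'])]
      rw [eR, hkey, if_pos hbj0]

end aux

theorem stmt_13 {Ω : Type*} [MeasureSpace Ω] [IsProbabilityMeasure (ℙ : Measure Ω)]
    (p : ℝ) (hp : p ∈ Set.Ioo (0:ℝ) 1) (k : ℕ) (hk : 4 ≤ k)
    (W : ℕ → Ω → ℝ) (hW : ∀ j, Measurable (W j))
    (h01 : ∀ j ω, W j ω = 0 ∨ W j ω = 1)
    (h1 : (ℙ : Measure Ω) {ω | W 1 ω = 1} = ENNReal.ofReal (p / (1 + p)))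
    -- path dynamics for W_2, …, W_{k-1}: conditional on any history, the next
    -- indicator is 1 with probability p if the previous one is 0, and 0 otherwise
    (hmarkov : ∀ j, 2 ≤ j → j ≤ k - 1 → ∀ b : ℕ → ℝ,
      (ℙ : Measure Ω) {ω | ∀ i ∈ Finset.Icc 1 (j - 1), W i ω = b i} ≠ 0 →
      ProbabilityTheory.cond ℙ {ω | ∀ i ∈ Finset.Icc 1 (j - 1), W i ω = b i}
          {ω | W j ω = 1}
        = if b (j - 1) = 0 then ENNReal.ofReal p else 0)
    -- the last edge of the cycle is realized iff both its neighbors are not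
    (hWk : ∀ ω, W k ω = 1 ↔ (W 1 ω = 0 ∧ W (k - 1) ω = 0)) :
    (ℙ : Measure Ω) {ω | W k ω = 1}
      = ENNReal.ofReal ((1 - (-p) ^ (k - 1)) / (1 + p) ^ 2) := by
  obtain ⟨hp0, hp1⟩ := hp
  have hps : (0:ℝ) < 1 + p := by linarith
  have hpsne : (1:ℝ) + p ≠ 0 := ne_of_gt hps
  have habs : ∀ n : ℕ, (-p) ^ n ≤ 1 := by
    intro n
    calc (-p) ^ n ≤ |(-p) ^ n| := le_abs_self _
      _ = p ^ n := by rw [abs_pow, abs_neg, abs_of_pos hp0]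
      _ ≤ 1 := pow_le_one₀ hp0.le hp1.le
  set vval : ℕ → ℝ := fun j => p * (1 - (-p) ^ (j - 1)) / (1 + p) ^ 2 with hvval
  set uval : ℕ → ℝ := fun j => (1 - (-p) ^ j) / (1 + p) ^ 2 with huval
  have hvnonneg : ∀ j, 0 ≤ vval j := by
    intro j
    apply div_nonneg _ (by positivity)
    have := habs (j - 1); nlinarith
  have hunonneg : ∀ j, 0 ≤ uval j := by
    intro j
    apply div_nonneg _ (by positivity)
    have := habs j; linarith
  -- P(W1 = 0)
  have hcompl : {ω : Ω | W 1 ω = 0} = {ω : Ω | W 1 ω = 1}ᶜ := by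
    ext ω
    simp only [Set.mem_setOf_eq, Set.mem_compl_iff]
    constructor
    · intro h h'; rw [h] at h'; exact zero_ne_one h'
    · intro h; rcases h01 1 ω with h' | h'
      · exact h'
      · exact absurd h' h
  have hP10 : (ℙ : Measure Ω) {ω | W 1 ω = 0} = ENNReal.ofReal (1 / (1 + p)) := by
    rw [hcompl, measure_compl (WsetMeas W hW 1 1) (measure_ne_top _ _), measure_univ, h1,
      ← ENNReal.ofReal_one, ← ENNReal.ofReal_sub _ (by positivity)]
    congr 1
    field_simp
    ring
  -- splitting on the value of W j
  have husplit : ∀ j : ℕ, (ℙ : Measure Ω) {ω | W 1 ω = 0}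
      = ℙ {ω | W 1 ω = 0 ∧ W j ω = 0} + ℙ {ω | W 1 ω = 0 ∧ W j ω = 1} := by
    intro j
    have hset : {ω : Ω | W 1 ω = 0}
        = {ω | W 1 ω = 0 ∧ W j ω = 0} ∪ {ω | W 1 ω = 0 ∧ W j ω = 1} := by
      ext ω
      simp only [Set.mem_setOf_eq, Set.mem_union]
      constructor
      · intro h; rcases h01 j ω with h' | h'
        · exact Or.inl ⟨h, h'⟩
        · exact Or.inr ⟨h, h'⟩
      · rintro (⟨h, -⟩ | ⟨h, -⟩) <;> exact h
    have hdisj : Disjoint {ω : Ω | W 1 ω = 0 ∧ W j ω = 0} {ω | W 1 ω = 0 ∧ W j ω = 1} := by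
      refine Set.disjoint_left.2 ?_
      rintro ω ⟨-, h0⟩ ⟨-, h1'⟩
      rw [h0] at h1'; exact zero_ne_one h1'
    rw [hset, measure_union hdisj ((WsetMeas W hW 1 0).inter (WsetMeas W hW j 1))]
  -- deriving the u-formula from the v-formula
  have huOf : ∀ j : ℕ, 1 ≤ j →
      (ℙ : Measure Ω) {ω | W 1 ω = 0 ∧ W j ω = 1} = ENNReal.ofReal (vval j) →
      (ℙ : Measure Ω) {ω | W 1 ω = 0 ∧ W j ω = 0} = ENNReal.ofReal (uval j) := by
    intro j hj hv
    have h := husplit j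
    rw [hP10, hv] at h
    have hsum : ENNReal.ofReal (uval j) + ENNReal.ofReal (vval j)
        = ENNReal.ofReal (1 / (1 + p)) := by
      rw [← ENNReal.ofReal_add (hunonneg j) (hvnonneg j)]
      congr 1
      obtain ⟨m, rfl⟩ := Nat.exists_eq_add_of_le hj
      simp only [huval, hvval, Nat.add_sub_cancel, Nat.add_sub_cancel_left]
      rw [pow_add, pow_one]
      field_simp
      ring
    rw [← hsum] at h
    have h' := h.symm
    rw [add_comm (ℙ {ω | W 1 ω = 0 ∧ W j ω = 0}) _,
      add_comm (ENNReal.ofReal (uval j)) _] at h'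
    exact (ENNReal.add_right_inj ENNReal.ofReal_ne_top).1 h'
  -- the v-formula by induction
  have hv : ∀ j : ℕ, 1 ≤ j → j ≤ k - 1 →
      (ℙ : Measure Ω) {ω | W 1 ω = 0 ∧ W j ω = 1} = ENNReal.ofReal (vval j) := by
    intro j hj
    induction j, hj using Nat.le_induction with
    | base =>
      intro _
      have : {ω : Ω | W 1 ω = 0 ∧ W 1 ω = 1} = ∅ := by
        ext ω
        simp only [Set.mem_setOf_eq, Set.mem_empty_iff_false, iff_false, not_and]
        intro h h'; rw [h] at h'; exact zero_ne_one h'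
      rw [this, measure_empty]
      simp [hvval]
    | succ j hj ih =>
      intro hjk
      have hjk' : j ≤ k - 1 := by omega
      rw [step_lemma W p ⟨hp0, hp1⟩ k hW h01 hmarkov j hj hjk,
        huOf j hj (ih hjk'), ← ENNReal.ofReal_mul hp0.le]
      congr 1
      simp only [hvval, huval, Nat.add_sub_cancel]
      ring
  -- conclusion
  have hk1 : 1 ≤ k - 1 := by omega
  have hfin := huOf (k - 1) hk1 (hv (k - 1) hk1 le_rfl)
  have hsetk : {ω : Ω | W k ω = 1} = {ω | W 1 ω = 0 ∧ W (k - 1) ω = 0} := by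
    ext ω; simpa using hWk ω
  rw [hsetk, hfin]
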